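/- Let T_0 = {(x_i, x_i*)}_{i=1}^n be a finite p-cyclically monotone operator in a Hilbert space, and define recursively T_k = ({x_k} × T_{k-1}^{μ_p}(x_k)) ∪ T_{k-1} for k = 1,...,n. Then each T_k, k = 1,...,n, is p-cyclically monotone. -/
import Mathlib


open scoped BigOperators RealInnerProductSpace

/-- The cyclic sum `∑_{i=0}^{p} ⟨x_{i+1} - x_i, x_i*⟩` (indices mod `p+1`),
in a real Hilbert space identified with its dual. -/
def cycSumH {X : Type*} [NormedAddCommGroup X] [InnerProductSpace ℝ X] (p : ℕ)
    (z : Fin (p + 1) → X × X) : ℝ :=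
  ∑ i, ⟪(z (i + 1)).1 - (z i).1, (z i).2⟫

/-- `T` (identified with its graph) is `p`-cyclically monotone. -/
def CycMonoH {X : Type*} [NormedAddCommGroup X] [InnerProductSpace ℝ X] (p : ℕ)
    (T : Set (X × X)) : Prop :=
  ∀ z : Fin (p + 1) → X × X, (∀ i, z i ∈ T) → cycSumH p z ≤ 0

/-- The `p`-cyclically monotone polar of `T`. -/
def cycPolarH {X : Type*} [NormedAddCommGroup X] [InnerProductSpace ℝ X] (p : ℕ)
    (T : Set (X × X)) : Set (X × X) :=
  {w | ∀ z : Fin (p + 1) → X × X,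
    z 0 = w → (∀ i, i ≠ 0 → z i ∈ T) → cycSumH p z ≤ 0}

/-- Domain of a multivalued operator (graph). -/
def opDom {X Y : Type*} (T : Set (X × Y)) : Set X := {x | ∃ y, (x, y) ∈ T}

/-- Range of a multivalued operator (graph). -/
def opRan {X Y : Type*} (T : Set (X × Y)) : Set Y := {y | ∃ x, (x, y) ∈ T}

/-- Image of a multivalued operator (graph) at a point. -/
def opIm {X Y : Type*} (T : Set (X × Y)) (x : X) : Set Y := {y | (x, y) ∈ T}

set_option linter.unusedSectionVars false

section Aux
variable {X : Type*} [NormedAddCommGroup X] [InnerProductSpace ℝ X]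

/-- First coordinate of the head of a list, with a default. -/
def fstHd (l : List (X × X)) (x : X) : X := match l with
  | [] => x
  | b :: _ => b.1

/-- Linear sum along a list with a closing point `x`. -/
def linSum : List (X × X) → X → ℝ
  | [], _ => 0
  | a :: t, x => ⟪fstHd t x - a.1, a.2⟫ + linSum t x

@[simp] lemma fstHd_nil (x : X) : fstHd ([] : List (X × X)) x = x := rfl
@[simp] lemma fstHd_cons (b : X × X) (t : List (X × X)) (x : X) : fstHd (b :: t) x = b.1 := rfl
@[simp] lemma linSum_nil (x : X) : linSum ([] : List (X × X)) x = 0 := rfl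
@[simp] lemma linSum_cons (a : X × X) (t : List (X × X)) (x : X) :
    linSum (a :: t) x = ⟪fstHd t x - a.1, a.2⟫ + linSum t x := rfl

lemma fstHd_append (u v : List (X × X)) (x : X) :
    fstHd (u ++ v) x = fstHd u (fstHd v x) := by cases u <;> simp

lemma linSum_append (u v : List (X × X)) (x : X) :
    linSum (u ++ v) x = linSum u (fstHd v x) + linSum v x := by
  induction u with
  | nil => simp
  | cons a u ih => simp [ih, fstHd_append]; ring

lemma linSum_cons_of_fst (a : X × X) (w : List (X × X)) (y : X) (h : fstHd w y = a.1) :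
    linSum (a :: w) y = linSum w y := by simp [h]

lemma linSum_replicate_cons (k : ℕ) (b : X × X) (t : List (X × X)) (x : X)
    (h : fstHd t x = b.1) :
    linSum (List.replicate k b ++ t) x = linSum t x := by
  induction k with
  | zero => simp
  | succ k ih =>
    rw [List.replicate_succ, List.cons_append, linSum_cons_of_fst, ih]
    rw [fstHd_append]
    cases k <;> simp [h, List.replicate_succ]


lemma linSum_ofFn (p : ℕ) (z : Fin (p + 1) → X × X) (x : X) :
    linSum (List.ofFn z) x =
      ∑ i : Fin p, ⟪(z i.succ).1 - (z i.castSucc).1, (z i.castSucc).2⟫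
        + ⟪x - (z (Fin.last p)).1, (z (Fin.last p)).2⟫ := by
  induction p with
  | zero => simp [List.ofFn_succ, Fin.last]
  | succ p ih =>
    rw [List.ofFn_succ, linSum_cons, ih (fun i => z i.succ), Fin.sum_univ_succ]
    have h1 : fstHd (List.ofFn fun i : Fin (p + 1) => z i.succ) x = (z 1).1 := by
      rw [List.ofFn_succ]; simp
    rw [h1]
    simp only [Fin.succ_castSucc, Fin.succ_last, Fin.castSucc_zero, Fin.succ_zero_eq_one]
    ring

lemma cycSumH_eq_linSum (p : ℕ) (z : Fin (p + 1) → X × X) :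
    cycSumH p z = linSum (List.ofFn z) ((z 0).1) := by
  rw [linSum_ofFn, cycSumH, Fin.sum_univ_castSucc]
  congr 1
  · apply Finset.sum_congr rfl
    intro i _
    rw [Fin.coeSucc_eq_succ]
  · rw [Fin.last_add_one]


lemma linSum_cons_replicate (k : ℕ) (a : X × X) (t : List (X × X)) (x : X) :
    linSum (a :: (List.replicate k a ++ t)) x = linSum (a :: t) x := by
  induction k with
  | zero => simp
  | succ k ih =>
    rw [List.replicate_succ, List.cons_append,
      linSum_cons_of_fst a _ x (by simp), ih]

lemma ofFn_get_cast {p : ℕ} (L : List (X × X)) (hL : L.length = p + 1) :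
    List.ofFn (fun i : Fin (p + 1) => L.get (Fin.cast hL.symm i)) = L := by
  apply List.ext_get (by simp [hL])
  intro i h1 h2
  rw [List.get_ofFn]
  rfl

lemma get_cast_zero {p : ℕ} (c : X × X) (r : List (X × X)) (hL : (c :: r).length = p + 1) :
    (c :: r).get (Fin.cast hL.symm 0) = c := by
  have h : (Fin.cast hL.symm (0 : Fin (p + 1))) = ⟨0, by simp⟩ := by ext; simp
  rw [h]
  rfl

lemma get_cast_succ {p : ℕ} (c : X × X) (r : List (X × X)) (hL : (c :: r).length = p + 1)
    (j : Fin p) :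
    (c :: r).get (Fin.cast hL.symm j.succ) =
      r.get ⟨j, by have hj := j.isLt; simp only [List.length_cons] at hL; omega⟩ := by
  have h : (Fin.cast hL.symm j.succ) =
      ⟨(j : ℕ) + 1, by rw [hL]; exact Nat.succ_lt_succ j.isLt⟩ := by ext; simp
  rw [h]
  simp

lemma cyc_of_list {p : ℕ} (c : X × X) (r : List (X × X)) (hL : (c :: r).length = p + 1) :
    cycSumH p (fun i => (c :: r).get (Fin.cast hL.symm i)) = linSum (c :: r) c.1 := by
  rw [cycSumH_eq_linSum, ofFn_get_cast _ hL, get_cast_zero _ _ hL]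

lemma short_cycle_S {p : ℕ} {S : Set (X × X)} (hS : CycMonoH p S)
    (l : List (X × X)) (hlen : l.length ≤ p + 1) (hmem : ∀ b ∈ l, b ∈ S) (x : X) :
    linSum l (fstHd l x) ≤ 0 := by
  cases l with
  | nil => simp
  | cons a t =>
    simp only [List.length_cons] at hlen
    have hLlen : (a :: (List.replicate (p - t.length) a ++ t)).length = p + 1 := by
      simp only [List.length_cons, List.length_append, List.length_replicate]
      omega
    have hmemL : ∀ i : Fin (p + 1),
        (a :: (List.replicate (p - t.length) a ++ t)).get (Fin.cast hLlen.symm i) ∈ S := by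
      intro i
      have hmem2 : ∀ b ∈ (a :: (List.replicate (p - t.length) a ++ t)), b ∈ S := by
        intro b hb
        simp only [List.mem_cons, List.mem_append] at hb
        rcases hb with rfl | hb | hb
        · exact hmem b (by simp)
        · rw [List.eq_of_mem_replicate hb]; exact hmem a (by simp)
        · exact hmem b (by simp [hb])
      exact hmem2 _ (by apply List.get_mem)
    have hcone := hS _ hmemL
    rw [cyc_of_list _ _ hLlen, linSum_cons_replicate] at hcone
    simpa using hcone

lemma short_cycle_A {p : ℕ} {S : Set (X × X)} {a : X × X} (ha : a ∈ cycPolarH p S)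
    (t : List (X × X)) (hlen : (a :: t).length ≤ p + 1) (hmem : ∀ b ∈ t, b ∈ S) (x : X) :
    linSum (a :: t) (fstHd (a :: t) x) ≤ 0 := by
  cases t with
  | nil => simp
  | cons b t' =>
    simp only [List.length_cons] at hlen
    have hLlen : (a :: b :: (List.replicate (p - (t'.length + 1)) b ++ t')).length
        = p + 1 := by
      simp only [List.length_cons, List.length_append, List.length_replicate]
      omega
    have hcone := ha (fun i =>
        (a :: b :: (List.replicate (p - (t'.length + 1)) b ++ t')).get (Fin.cast hLlen.symm i))
      (get_cast_zero _ _ hLlen)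
      (by
        intro i hi
        obtain ⟨j, rfl⟩ := Fin.eq_succ_of_ne_zero hi
        show (a :: b :: (List.replicate (p - (t'.length + 1)) b ++ t')).get
          (Fin.cast hLlen.symm j.succ) ∈ S
        rw [get_cast_succ _ _ hLlen j]
        have hmem2 : ∀ c ∈ (b :: (List.replicate (p - (t'.length + 1)) b ++ t')), c ∈ S := by
          intro c hc
          simp only [List.mem_cons, List.mem_append] at hc
          rcases hc with rfl | hc | hc
          · exact hmem c (by simp)
          · rw [List.eq_of_mem_replicate hc]; exact hmem b (by simp)
          · exact hmem c (by simp [hc])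
        exact hmem2 _ (by apply List.get_mem))
    rw [cyc_of_list _ _ hLlen] at hcone
    rw [linSum_cons, linSum_cons_replicate] at hcone
    have hfst : fstHd (b :: (List.replicate (p - (t'.length + 1)) b ++ t')) a.1 = b.1 := by simp
    rw [hfst] at hcone
    simpa using hcone


lemma main_ind {p : ℕ} {S A : Set (X × X)} {x : X} (hS : CycMonoH p S)
    (hA : ∀ a ∈ A, a ∈ cycPolarH p S) (hx : ∀ a ∈ A, a.1 = x) :
    ∀ N : ℕ, ∀ l : List (X × X), l.length ≤ N → l.length ≤ p + 1 →
      (∀ b ∈ l, b ∈ S ∪ A) → linSum l (fstHd l x) ≤ 0 := by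
  intro N
  induction N with
  | zero =>
    intro l h _ _
    have : l = [] := List.length_eq_zero_iff.mp (Nat.le_zero.mp h)
    simp [this]
  | succ N ih =>
    intro l hN hp hmem
    by_cases hEx : ∃ b ∈ l, b ∈ A
    · obtain ⟨b, hbl, hbA⟩ := hEx
      obtain ⟨u, v, rfl⟩ := List.append_of_mem hbl
      have hrot : linSum (u ++ b :: v) (fstHd (u ++ b :: v) x)
          = linSum ((b :: v) ++ u) b.1 := by
        rw [linSum_append, linSum_append, fstHd_append]
        simp only [fstHd_cons]
        ring
      rw [hrot]
      have hmem' : ∀ d ∈ v ++ u, d ∈ S ∪ A := by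
        intro d hd
        apply hmem
        simp only [List.mem_append, List.mem_cons] at hd ⊢
        tauto
      by_cases hEx2 : ∃ c ∈ v ++ u, c ∈ A
      · obtain ⟨c, hcm, hcA⟩ := hEx2
        obtain ⟨u', v', hsplit⟩ := List.append_of_mem hcm
        have hre : (b :: v) ++ u = (b :: u') ++ (c :: v') := by
          simp only [List.cons_append]
          rw [hsplit]
        rw [hre, linSum_append]
        simp only [fstHd_cons]
        have hb1 : b.1 = x := hx b hbA
        have hc1 : c.1 = x := hx c hcA
        have hlensum : u'.length + v'.length + 2 = (u ++ b :: v).length := by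
          have := congrArg List.length hsplit
          simp only [List.length_append, List.length_cons] at this ⊢
          omega
        have hmu' : ∀ d ∈ b :: u', d ∈ S ∪ A := by
          intro d hd
          rcases List.mem_cons.mp hd with rfl | hd
          · exact hmem d hbl
          · exact hmem' d (by rw [hsplit]; simp [hd])
        have hmv' : ∀ d ∈ c :: v', d ∈ S ∪ A := by
          intro d hd
          rcases List.mem_cons.mp hd with rfl | hd
          · exact hmem' d hcm
          · exact hmem' d (by rw [hsplit]; simp [hd])
        have h1 := ih (b :: u') (by simp only [List.length_cons]; omega)
          (by simp only [List.length_cons]; omega) hmu'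
        have h2 := ih (c :: v') (by simp only [List.length_cons]; omega)
          (by simp only [List.length_cons]; omega) hmv'
        simp only [fstHd_cons] at h1 h2
        calc linSum (b :: u') c.1 + linSum (c :: v') b.1
            = linSum (b :: u') b.1 + linSum (c :: v') c.1 := by rw [hb1, hc1]
          _ ≤ 0 := by linarith
      · have hmemS : ∀ c ∈ v ++ u, c ∈ S := by
          intro c hc
          rcases hmem' c hc with h | h
          · exact h
          · exact absurd ⟨c, hc, h⟩ hEx2
        have := short_cycle_A (hA b hbA) (v ++ u)
          (by
            have := congrArg List.length (rfl : (u ++ b :: v) = u ++ b :: v)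
            simp only [List.length_cons, List.length_append] at hp ⊢
            omega)
          hmemS x
        simp only [fstHd_cons] at this
        rw [List.cons_append]
        exact this
    · have hmemS : ∀ b ∈ l, b ∈ S := by
        intro b hb
        rcases hmem b hb with h | h
        · exact h
        · exact absurd ⟨b, hb, h⟩ hEx
      exact short_cycle_S hS l hp hmemS x

lemma cycMono_union {p : ℕ} {S A : Set (X × X)} {x : X} (hS : CycMonoH p S)
    (hA : ∀ a ∈ A, a ∈ cycPolarH p S) (hx : ∀ a ∈ A, a.1 = x) :
    CycMonoH p (A ∪ S) := by
  intro z hz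
  rw [cycSumH_eq_linSum]
  have h0 : (z 0).1 = fstHd (List.ofFn z) x := by rw [List.ofFn_succ]; rfl
  rw [h0]
  apply main_ind hS hA hx (p + 1) _ (by simp) (by simp)
  intro b hb
  rw [List.mem_ofFn] at hb
  obtain ⟨i, rfl⟩ := hb
  rcases hz i with h | h
  · exact Or.inr h
  · exact Or.inl h

end Aux

theorem construction_cycMono {X : Type*} [NormedAddCommGroup X] [InnerProductSpace ℝ X]
    (p n : ℕ) (w : Fin n → X × X) (T : ℕ → Set (X × X))
    (hmono : CycMonoH p (Set.range w))
    (hT0 : T 0 = Set.range w)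
    (hTk : ∀ k : Fin n, T ((k : ℕ) + 1) =
      ({(w k).1} ×ˢ opIm (cycPolarH p (T (k : ℕ))) (w k).1) ∪ T (k : ℕ)) :
    ∀ k ≤ n, CycMonoH p (T k) := by
  intro k
  induction k with
  | zero =>
    intro _
    rw [hT0]
    exact hmono
  | succ k ih =>
    intro hk
    have hk' : k < n := hk
    have ihk := ih (le_of_lt hk')
    have heq : T (k + 1) =
        ({(w ⟨k, hk'⟩).1} ×ˢ opIm (cycPolarH p (T k)) (w ⟨k, hk'⟩).1) ∪ T k :=
      hTk ⟨k, hk'⟩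
    rw [heq]
    apply cycMono_union (x := (w ⟨k, hk'⟩).1) ihk
    · rintro ⟨a1, a2⟩ ha
      rw [Set.mem_prod] at ha
      obtain ⟨h1, h2⟩ := ha
      simp only [Set.mem_singleton_iff] at h1
      subst h1
      exact h2
    · rintro ⟨a1, a2⟩ ha
      rw [Set.mem_prod] at ha
      simpa using ha.1
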